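/- arXiv:math/0610507 — 2 statements merged into one kernel-verified Lean document; each statement's English description precedes it below -/
import Mathlib

section
/- A Stieltjes transform determines its representing pair uniquely: if a₁ + ∫ 1/(θ+x) dμ₁(x) = a₂ + ∫ 1/(θ+x) dμ₂(x) for all θ > 0, where a₁, a₂ ≥ 0 and μ₁, μ₂ are positive measures on [0,∞) with ∫ 1/(1+x) dμᵢ(x) < ∞, then a₁ = a₂ and μ₁ = μ₂. -/
open MeasureTheory Set Filter Topology Polynomial
open scoped NNReal ENNReal

namespace Stmt7


variable {μ : Measure ℝ}

lemma meas_aux (θ : ℝ) : Measurable fun x : ℝ => (θ + x)⁻¹ :=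
  (measurable_const.add measurable_id).inv

lemma ae_nonneg (h : μ (Iio 0) = 0) : ∀ᵐ x ∂μ, 0 ≤ x := by
  rw [ae_iff]
  convert h using 2
  ext x; simp [not_le]

lemma integrable_base (hae : ∀ᵐ x ∂μ, 0 ≤ x)
    (hint : ∫⁻ x, ENNReal.ofReal (1 / (1 + x)) ∂μ ≠ ⊤) :
    Integrable (fun x => (1 + x)⁻¹) μ := by
  refine ⟨(meas_aux 1).aestronglyMeasurable, ?_⟩
  rw [hasFiniteIntegral_iff_norm]
  refine lt_of_le_of_lt (lintegral_mono_ae ?_) hint.lt_top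
  filter_upwards [hae] with x hx
  have h1 : (0:ℝ) < 1 + x := by linarith
  rw [Real.norm_eq_abs, abs_of_pos (inv_pos.2 h1), one_div]

lemma bound_ineq {t x : ℝ} (ht : 0 < t) (hx : 0 ≤ x) :
    (t + x)⁻¹ ≤ max 1 t⁻¹ * (1 + x)⁻¹ := by
  set C := max 1 t⁻¹ with hC
  have hC1 : (1:ℝ) ≤ C := le_max_left _ _
  have hCt : t⁻¹ ≤ C := le_max_right _ _
  have hC0 : 0 < C := lt_of_lt_of_le one_pos hC1
  have h1x : (0:ℝ) < 1 + x := by linarith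
  have htx : (0:ℝ) < t + x := by linarith
  have hCθ : 1 ≤ C * t := by
    have := inv_mul_cancel₀ ht.ne'
    calc (1:ℝ) = t⁻¹ * t := this.symm
    _ ≤ C * t := mul_le_mul_of_nonneg_right hCt ht.le
  have key : 1 + x ≤ C * (t + x) := by nlinarith
  have h2 : (1 + x) / (t + x) ≤ C := (div_le_iff₀ htx).mpr (by linarith)
  calc (t + x)⁻¹ = (1 + x)⁻¹ * ((1 + x) / (t + x)) := by field_simp
  _ ≤ (1 + x)⁻¹ * C := mul_le_mul_of_nonneg_left h2 (inv_nonneg.2 h1x.le)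
  _ = C * (1 + x)⁻¹ := mul_comm _ _

lemma pow_inv_bound {t x s : ℝ} (ht : 0 < t) (hx : 0 ≤ x) (hs : t ≤ s) (k : ℕ) :
    ((s + x)⁻¹) ^ (k + 1) ≤ (t⁻¹ ^ k * max 1 t⁻¹) * (1 + x)⁻¹ := by
  have htx : (0:ℝ) < t + x := by linarith
  have hsx : (0:ℝ) < s + x := by linarith
  have h1 : (s + x)⁻¹ ≤ (t + x)⁻¹ := inv_anti₀ htx (by linarith)
  have h2 : (s + x)⁻¹ ≤ t⁻¹ := inv_anti₀ ht (by linarith)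
  have h3 : (t + x)⁻¹ ≤ max 1 t⁻¹ * (1 + x)⁻¹ := bound_ineq ht hx
  have h0 : 0 ≤ (s + x)⁻¹ := (inv_pos.2 hsx).le
  calc ((s + x)⁻¹) ^ (k + 1) = ((s + x)⁻¹) ^ k * (s + x)⁻¹ := pow_succ _ _
  _ ≤ (t⁻¹) ^ k * (max 1 t⁻¹ * (1 + x)⁻¹) :=
      mul_le_mul (pow_le_pow_left₀ h0 h2 k) (h1.trans h3) h0
        (pow_nonneg (inv_nonneg.2 ht.le) k)
  _ = (t⁻¹ ^ k * max 1 t⁻¹) * (1 + x)⁻¹ := by ring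

lemma integrable_pow (hae : ∀ᵐ x ∂μ, 0 ≤ x)
    (hI : Integrable (fun x => (1 + x)⁻¹) μ) {θ : ℝ} (hθ : 0 < θ) (n : ℕ) :
    Integrable (fun x => ((θ + x)⁻¹) ^ (n + 1)) μ := by
  refine Integrable.mono (hI.const_mul (θ⁻¹ ^ n * max 1 θ⁻¹))
    (((meas_aux θ).pow_const _).aestronglyMeasurable) ?_
  filter_upwards [hae] with x hx
  have hsx : (0:ℝ) < θ + x := by linarith
  have h1x : (0:ℝ) < 1 + x := by linarith
  have hb := pow_inv_bound hθ hx le_rfl n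
  have hpos : (0:ℝ) < θ⁻¹ ^ n * max 1 θ⁻¹ :=
    mul_pos (pow_pos (inv_pos.2 hθ) n) (lt_of_lt_of_le one_pos (le_max_left _ _))
  rw [Real.norm_eq_abs, Real.norm_eq_abs,
    abs_of_nonneg (pow_nonneg (inv_pos.2 hsx).le _),
    abs_of_nonneg (mul_nonneg hpos.le (inv_pos.2 h1x).le)]
  exact hb


lemma hasDerivAt_integral (hae : ∀ᵐ x ∂μ, 0 ≤ x)
    (hI : Integrable (fun x => (1 + x)⁻¹) μ)
    (hInt : ∀ s : ℝ, 0 < s → ∀ k : ℕ, Integrable (fun x => ((s + x)⁻¹) ^ (k + 1)) μ)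
    (hb : ∀ {t x s : ℝ}, 0 < t → 0 ≤ x → t ≤ s → ∀ k : ℕ,
      ((s + x)⁻¹) ^ (k + 1) ≤ (t⁻¹ ^ k * max 1 t⁻¹) * (1 + x)⁻¹)
    (n : ℕ) {θ : ℝ} (hθ : 0 < θ) :
    HasDerivAt (fun s => ∫ x, ((s + x)⁻¹) ^ (n + 1) ∂μ)
      (∫ x, -((n : ℝ) + 1) * ((θ + x)⁻¹) ^ (n + 2) ∂μ) θ := by
  have hθ2 : (0:ℝ) < θ / 2 := by linarith
  set D : ℝ := ((n : ℝ) + 1) * ((θ/2)⁻¹ ^ (n + 1) * max 1 (θ/2)⁻¹) with hD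
  have hDpos : 0 < D := by positivity
  have key := hasDerivAt_integral_of_dominated_loc_of_deriv_le (μ := μ)
    (F := fun s x => ((s + x)⁻¹) ^ (n + 1))
    (F' := fun s x => -((n : ℝ) + 1) * ((s + x)⁻¹) ^ (n + 2))
    (x₀ := θ) (bound := fun x => D * (1 + x)⁻¹) (Metric.ball_mem_nhds θ hθ2)
    (Eventually.of_forall fun s => ((meas_aux s).pow_const _).aestronglyMeasurable)
    (hInt θ hθ n)
    ((((meas_aux θ).pow_const _).const_mul _).aestronglyMeasurable)
    ?_ (hI.const_mul D) ?_
  · exact key.2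
  · -- bound
    filter_upwards [hae] with x hx
    intro s hs
    have hsθ : θ / 2 ≤ s := by
      have := Metric.mem_ball.mp hs
      rw [Real.dist_eq, abs_lt] at this
      linarith [this.1]
    have hsx : (0:ℝ) < s + x := by linarith
    have h1x : (0:ℝ) < 1 + x := by linarith
    have hbb := hb hθ2 hx hsθ (n + 1)
    rw [norm_mul, Real.norm_eq_abs, Real.norm_eq_abs,
      abs_of_nonneg (pow_nonneg (inv_pos.2 hsx).le _)]
    have habs : |(-((n : ℝ) + 1))| = (n : ℝ) + 1 := by
      rw [abs_neg, abs_of_nonneg]; positivity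
    rw [habs, hD]
    calc ((n : ℝ) + 1) * ((s + x)⁻¹) ^ (n + 1 + 1)
        ≤ ((n : ℝ) + 1) * (((θ/2)⁻¹ ^ (n+1) * max 1 (θ/2)⁻¹) * (1 + x)⁻¹) := by
          apply mul_le_mul_of_nonneg_left hbb (by positivity)
      _ = ((n : ℝ) + 1) * ((θ/2)⁻¹ ^ (n + 1) * max 1 (θ/2)⁻¹) * (1 + x)⁻¹ := by ring
  · -- differentiability
    filter_upwards [hae] with x hx
    intro s hs
    have hsθ : θ / 2 ≤ s := by
      have := Metric.mem_ball.mp hs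
      rw [Real.dist_eq, abs_lt] at this
      linarith [this.1]
    have hsx : (0:ℝ) < s + x := by linarith
    have h0 : HasDerivAt (fun u : ℝ => u + x) 1 s := (hasDerivAt_id s).add_const x
    have h1 : HasDerivAt (fun u : ℝ => (u + x)⁻¹) (-1 / (s + x) ^ 2) s := h0.inv hsx.ne'
    have h2 : HasDerivAt (fun u : ℝ => ((u + x)⁻¹) ^ (n + 1)) _ s := h1.pow (n + 1)
    refine h2.congr_deriv ?_
    show _ = -((n : ℝ) + 1) * ((s + x)⁻¹) ^ (n + 2)
    have he : -1 / (s + x) ^ 2 = -((s + x)⁻¹ * (s + x)⁻¹) := by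
      rw [pow_two]; field_simp
    rw [he, Nat.add_sub_cancel]
    push_cast
    rw [show n + 2 = n + 1 + 1 from rfl, pow_succ, pow_succ]
    ring


lemma tendsto_zero (hae : ∀ᵐ x ∂μ, 0 ≤ x)
    (hI : Integrable (fun x => (1 + x)⁻¹) μ) :
    Tendsto (fun θ : ℝ => ∫ x, (θ + x)⁻¹ ∂μ) atTop (𝓝 0) := by
  have := tendsto_integral_filter_of_dominated_convergence (μ := μ)
    (F := fun (θ : ℝ) x => (θ + x)⁻¹) (f := fun _ => (0:ℝ)) (l := atTop)
    (bound := fun x => (1 + x)⁻¹)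
    (Eventually.of_forall fun s => (meas_aux s).aestronglyMeasurable)
    ?_ hI ?_
  · simpa using this
  · filter_upwards [eventually_ge_atTop (1:ℝ)] with θ hθ
    filter_upwards [hae] with x hx
    have h1x : (0:ℝ) < 1 + x := by linarith
    have hθx : (0:ℝ) < θ + x := by linarith
    rw [Real.norm_eq_abs, abs_of_pos (inv_pos.2 hθx)]
    exact inv_anti₀ h1x (by linarith)
  · filter_upwards [hae] with x hx
    have : Tendsto (fun θ : ℝ => θ + x) atTop atTop :=
      tendsto_atTop_add_const_right _ x tendsto_id
    exact this.inv_tendsto_atTop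


lemma moment_eq {μ₁ μ₂ : Measure ℝ}
    (hae₁ : ∀ᵐ x ∂μ₁, 0 ≤ x) (hae₂ : ∀ᵐ x ∂μ₂, 0 ≤ x)
    (hI₁ : Integrable (fun x => (1 + x)⁻¹) μ₁)
    (hI₂ : Integrable (fun x => (1 + x)⁻¹) μ₂)
    (heq' : ∀ θ : ℝ, 0 < θ → ∫ x, (θ + x)⁻¹ ∂μ₁ = ∫ x, (θ + x)⁻¹ ∂μ₂) :
    ∀ n : ℕ, ∀ θ : ℝ, 0 < θ →
      ∫ x, ((θ + x)⁻¹) ^ (n + 1) ∂μ₁ = ∫ x, ((θ + x)⁻¹) ^ (n + 1) ∂μ₂ := by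
  intro n
  induction n with
  | zero => intro θ hθ; simpa [pow_one] using heq' θ hθ
  | succ n ih =>
    intro θ hθ
    have H₁ := hasDerivAt_integral hae₁ hI₁ (fun s hs k => integrable_pow hae₁ hI₁ hs k)
      (fun ht hx hs k => pow_inv_bound ht hx hs k) n hθ
    have H₂ := hasDerivAt_integral hae₂ hI₂ (fun s hs k => integrable_pow hae₂ hI₂ hs k)
      (fun ht hx hs k => pow_inv_bound ht hx hs k) n hθ
    have heqn : (fun s => ∫ x, ((s + x)⁻¹) ^ (n + 1) ∂μ₁)
        =ᶠ[𝓝 θ] (fun s => ∫ x, ((s + x)⁻¹) ^ (n + 1) ∂μ₂) := by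
      filter_upwards [isOpen_Ioi.mem_nhds (mem_Ioi.mpr hθ)] with s hs
      exact ih s hs
    have := (H₂.congr_of_eventuallyEq heqn).unique H₁
    have h2 : ∫ x, ((θ + x)⁻¹) ^ (n + 2) ∂μ₂ = ∫ x, ((θ + x)⁻¹) ^ (n + 2) ∂μ₁ := by
      have hc : -((n : ℝ) + 1) ≠ 0 := neg_ne_zero.mpr (by positivity)
      rw [integral_const_mul, integral_const_mul] at this
      exact mul_left_cancel₀ hc this
    simpa [show n + 1 + 1 = n + 2 from rfl] using h2.symm

/-- continuity of integration against a finite measure on C(K, ℝ) -/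
lemma continuous_integral_CK {K : Type*} [TopologicalSpace K] [CompactSpace K]
    [MeasurableSpace K] [OpensMeasurableSpace K]
    (π : Measure K) [IsFiniteMeasure π] :
    Continuous (fun f : C(K, ℝ) => ∫ t, f t ∂π) := by
  have hL : LipschitzWith (π univ).toNNReal (fun f : C(K, ℝ) => ∫ t, f t ∂π) := by
    apply LipschitzWith.of_dist_le_mul
    intro f g
    have hfi : Integrable (fun t => f t) π := by
      exact (BoundedContinuousFunction.mkOfCompact f).integrable π
    have hgi : Integrable (fun t => g t) π := by
      exact (BoundedContinuousFunction.mkOfCompact g).integrable π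
    rw [dist_eq_norm, ← integral_sub hfi hgi]
    calc ‖∫ t, (f t - g t) ∂π‖ ≤ ‖f - g‖ * (π univ).toReal := by
          apply norm_integral_le_of_norm_le_const
          filter_upwards with t
          calc ‖f t - g t‖ = ‖(f - g) t‖ := by simp
          _ ≤ ‖f - g‖ := ContinuousMap.norm_coe_le_norm _ t
      _ = ((π univ).toNNReal : ℝ) * dist f g := by
          rw [dist_eq_norm, mul_comm]
          rfl
  exact hL.continuous


lemma integrable_CK {K : Type*} [TopologicalSpace K] [CompactSpace K]
    [MeasurableSpace K] [OpensMeasurableSpace K]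
    (π : Measure K) [IsFiniteMeasure π] (f : C(K, ℝ)) :
    Integrable (fun t => f t) π := by
  exact (BoundedContinuousFunction.mkOfCompact f).integrable π

/-- two finite measures on Icc 0 1 with equal moments are equal -/
lemma measures_eq_of_moments {π₁ π₂ : Measure (Icc (0:ℝ) 1)}
    [IsFiniteMeasure π₁] [IsFiniteMeasure π₂]
    (hmom : ∀ n : ℕ, ∫ t, ((t : ℝ)) ^ n ∂π₁ = ∫ t, ((t : ℝ)) ^ n ∂π₂) :
    π₁ = π₂ := by
  have hcont : ∀ f : C(Icc (0:ℝ) 1, ℝ), ∫ t, f t ∂π₁ = ∫ t, f t ∂π₂ := by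
    intro f
    have hSclosed : IsClosed {f : C(Icc (0:ℝ) 1, ℝ) | ∫ t, f t ∂π₁ = ∫ t, f t ∂π₂} :=
      isClosed_eq (continuous_integral_CK π₁) (continuous_integral_CK π₂)
    have hpoly : ∀ p : ℝ[X], ∫ t : Icc (0:ℝ) 1, p.eval (t : ℝ) ∂π₁
        = ∫ t : Icc (0:ℝ) 1, p.eval (t : ℝ) ∂π₂ := by
      intro p
      induction p using Polynomial.induction_on' with
      | add p q hp hq =>
        have hc : ∀ r : ℝ[X], Continuous fun t : Icc (0:ℝ) 1 => r.eval (t : ℝ) :=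
          fun r => r.continuous.comp continuous_subtype_val
        simp only [Polynomial.eval_add]
        have hip1 : Integrable (fun t : Icc (0:ℝ) 1 => p.eval (t : ℝ)) π₁ :=
          integrable_CK π₁ ⟨_, hc p⟩
        have hiq1 : Integrable (fun t : Icc (0:ℝ) 1 => q.eval (t : ℝ)) π₁ :=
          integrable_CK π₁ ⟨_, hc q⟩
        have hip2 : Integrable (fun t : Icc (0:ℝ) 1 => p.eval (t : ℝ)) π₂ :=
          integrable_CK π₂ ⟨_, hc p⟩
        have hiq2 : Integrable (fun t : Icc (0:ℝ) 1 => q.eval (t : ℝ)) π₂ :=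
          integrable_CK π₂ ⟨_, hc q⟩
        rw [integral_add hip1 hiq1, integral_add hip2 hiq2, hp, hq]
      | monomial n a =>
        simp only [Polynomial.eval_monomial]
        rw [integral_const_mul, integral_const_mul, hmom n]
    have hsub : ((polynomialFunctions (Icc (0:ℝ) 1)) : Set C(Icc (0:ℝ) 1, ℝ))
        ⊆ {f : C(Icc (0:ℝ) 1, ℝ) | ∫ t, f t ∂π₁ = ∫ t, f t ∂π₂} := by
      intro f hf
      rw [polynomialFunctions_coe] at hf
      obtain ⟨p, rfl⟩ := hf
      simpa using hpoly p
    have hcl : closure ((polynomialFunctions (Icc (0:ℝ) 1)) : Set C(Icc (0:ℝ) 1, ℝ))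
        = univ := by
      have h := polynomialFunctions_closure_eq_top 0 1
      rw [SetLike.ext'_iff] at h
      simpa [Subalgebra.topologicalClosure_coe] using h
    have : f ∈ closure ((polynomialFunctions (Icc (0:ℝ) 1)) : Set C(Icc (0:ℝ) 1, ℝ)) := by
      rw [hcl]; trivial
    exact closure_minimal hsub hSclosed this
  apply ext_of_forall_lintegral_eq_of_IsFiniteMeasure
  intro f
  have hf1 : Integrable (fun t => (f t : ℝ)) π₁ :=
    integrable_CK π₁ ⟨fun t => (f t : ℝ), NNReal.continuous_coe.comp f.continuous⟩
  have hf2 : Integrable (fun t => (f t : ℝ)) π₂ :=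
    integrable_CK π₂ ⟨fun t => (f t : ℝ), NNReal.continuous_coe.comp f.continuous⟩
  rw [lintegral_coe_eq_integral _ hf1, lintegral_coe_eq_integral _ hf2]
  congr 1
  exact hcont ⟨fun t => (f t : ℝ), NNReal.continuous_coe.comp f.continuous⟩

lemma measure_eq {μ₁ μ₂ : Measure ℝ}
    (hae₁ : ∀ᵐ x ∂μ₁, 0 ≤ x) (hae₂ : ∀ᵐ x ∂μ₂, 0 ≤ x)
    (hint₁ : ∫⁻ x, ENNReal.ofReal ((1 + x)⁻¹) ∂μ₁ ≠ ⊤)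
    (hint₂ : ∫⁻ x, ENNReal.ofReal ((1 + x)⁻¹) ∂μ₂ ≠ ⊤)
    (hmom : ∀ n : ℕ, ∫ x, ((1 + x)⁻¹) ^ (n + 1) ∂μ₁ = ∫ x, ((1 + x)⁻¹) ^ (n + 1) ∂μ₂) :
    μ₁ = μ₂ := by
  set d : ℝ → ℝ≥0 := fun x => Real.toNNReal ((1 + x)⁻¹) with hd_def
  have hd : Measurable d := (meas_aux 1).real_toNNReal
  have hcoe : ∀ x, ((d x : ℝ≥0∞)) = ENNReal.ofReal ((1 + x)⁻¹) := fun x => rfl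
  set ν₁ : Measure ℝ := μ₁.withDensity (fun x => (d x : ℝ≥0∞)) with hν₁
  set ν₂ : Measure ℝ := μ₂.withDensity (fun x => (d x : ℝ≥0∞)) with hν₂
  have hfin₁ : IsFiniteMeasure ν₁ := isFiniteMeasure_withDensity (by simpa [hcoe] using hint₁)
  have hfin₂ : IsFiniteMeasure ν₂ := isFiniteMeasure_withDensity (by simpa [hcoe] using hint₂)
  have haeν₁ : ∀ᵐ x ∂ν₁, 0 ≤ x :=
    hae₁.filter_mono (withDensity_absolutelyContinuous μ₁ _).ae_le
  have haeν₂ : ∀ᵐ x ∂ν₂, 0 ≤ x :=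
    hae₂.filter_mono (withDensity_absolutelyContinuous μ₂ _).ae_le
  set ψ : ℝ → Icc (0:ℝ) 1 := fun x => projIcc 0 1 zero_le_one ((1 + x)⁻¹) with hψ_def
  have hψ : Measurable ψ := continuous_projIcc.measurable.comp (meas_aux 1)
  set π₁ : Measure (Icc (0:ℝ) 1) := ν₁.map ψ with hπ₁
  set π₂ : Measure (Icc (0:ℝ) 1) := ν₂.map ψ with hπ₂
  have hπfin₁ : IsFiniteMeasure π₁ := Measure.isFiniteMeasure_map ν₁ ψ
  have hπfin₂ : IsFiniteMeasure π₂ := Measure.isFiniteMeasure_map ν₂ ψ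
  -- moments of π
  have hmem : ∀ x : ℝ, 0 ≤ x → (1 + x)⁻¹ ∈ Icc (0:ℝ) 1 := by
    intro x hx
    constructor
    · positivity
    · rw [inv_le_one_iff₀]; right; linarith
  have hψcoe : ∀ x : ℝ, 0 ≤ x → ((ψ x : ℝ)) = (1 + x)⁻¹ := by
    intro x hx
    rw [hψ_def]
    simp only [coe_projIcc]
    rw [min_eq_right (hmem x hx).2, max_eq_right (hmem x hx).1]
  have hmomπ : ∀ (μ : Measure ℝ) (hae : ∀ᵐ x ∂μ, 0 ≤ x) (n : ℕ),
      ∫ t, ((t : ℝ)) ^ n ∂((μ.withDensity (fun x => (d x : ℝ≥0∞))).map ψ)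
        = ∫ x, ((1 + x)⁻¹) ^ (n + 1) ∂μ := by
    intro μ hae n
    have haeν : ∀ᵐ x ∂(μ.withDensity (fun x => (d x : ℝ≥0∞))), 0 ≤ x :=
      hae.filter_mono (withDensity_absolutelyContinuous μ _).ae_le
    rw [integral_map (f := fun t : Icc (0:ℝ) 1 => (t:ℝ) ^ n) hψ.aemeasurable
      ((continuous_subtype_val.pow n).measurable.aestronglyMeasurable)]
    rw [show (fun x => ((ψ x : ℝ)) ^ n) = fun x => ((ψ x : ℝ)) ^ n from rfl]
    have step1 : ∫ x, ((ψ x : ℝ)) ^ n ∂(μ.withDensity (fun x => (d x : ℝ≥0∞)))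
        = ∫ x, ((1 + x)⁻¹) ^ n ∂(μ.withDensity (fun x => (d x : ℝ≥0∞))) := by
      apply integral_congr_ae
      filter_upwards [haeν] with x hx
      rw [hψcoe x hx]
    rw [step1, integral_withDensity_eq_integral_smul hd]
    apply integral_congr_ae
    filter_upwards [hae] with x hx
    have h1x : (0:ℝ) < 1 + x := by linarith
    rw [NNReal.smul_def, hd_def]
    simp only [Real.coe_toNNReal _ (inv_pos.2 h1x).le]
    rw [smul_eq_mul, pow_succ, mul_comm]
  have hπeq : π₁ = π₂ := by
    apply measures_eq_of_moments
    intro n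
    rw [hπ₁, hπ₂, hmomπ μ₁ hae₁ n, hmomπ μ₂ hae₂ n, hmom n]
  -- recover ν from π
  set g : Icc (0:ℝ) 1 → ℝ := fun t => ((t : ℝ))⁻¹ - 1 with hg_def
  have hg : Measurable g := (measurable_subtype_coe.inv).sub measurable_const
  have hrec : ∀ (μ : Measure ℝ), (∀ᵐ x ∂μ, 0 ≤ x) →
      Measure.map g (Measure.map ψ (μ.withDensity (fun x => (d x : ℝ≥0∞))))
        = μ.withDensity (fun x => (d x : ℝ≥0∞)) := by
    intro μ hae
    have haeν : ∀ᵐ x ∂(μ.withDensity (fun x => (d x : ℝ≥0∞))), 0 ≤ x :=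
      hae.filter_mono (withDensity_absolutelyContinuous μ _).ae_le
    rw [Measure.map_map hg hψ]
    have : (g ∘ ψ) =ᵐ[μ.withDensity (fun x => (d x : ℝ≥0∞))] id := by
      filter_upwards [haeν] with x hx
      have h1x : (0:ℝ) < 1 + x := by linarith
      simp only [Function.comp_apply, hg_def, id_eq]
      rw [hψcoe x hx, inv_inv]
      ring
    rw [Measure.map_congr this, Measure.map_id]
  have hνeq : μ₁.withDensity (fun x => (d x : ℝ≥0∞))
      = μ₂.withDensity (fun x => (d x : ℝ≥0∞)) := by
    rw [← hrec μ₁ hae₁, ← hrec μ₂ hae₂]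
    exact congrArg (Measure.map g) hπeq
  -- recover μ from ν
  have hrec2 : ∀ (μ : Measure ℝ), (∀ᵐ x ∂μ, 0 ≤ x) →
      (μ.withDensity (fun x => (d x : ℝ≥0∞))).withDensity
        (fun x => ENNReal.ofReal (1 + x)) = μ := by
    intro μ hae
    have he : Measurable fun x : ℝ => ENNReal.ofReal (1 + x) :=
      (measurable_const.add measurable_id).ennreal_ofReal
    have key : μ.withDensity
        ((fun x => (d x : ℝ≥0∞)) * fun x => ENNReal.ofReal (1 + x)) = μ := by
      have h1 : ((fun x => (d x : ℝ≥0∞)) * fun x => ENNReal.ofReal (1 + x)) =ᵐ[μ] 1 := by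
        filter_upwards [hae] with x hx
        have h1x : (0:ℝ) < 1 + x := by linarith
        simp only [Pi.mul_apply, Pi.one_apply]
        rw [hcoe, ← ENNReal.ofReal_mul (inv_pos.2 h1x).le, inv_mul_cancel₀ h1x.ne']
        simp
      rw [withDensity_congr_ae h1, withDensity_one]
    rw [withDensity_mul μ hd.coe_nnreal_ennreal he] at key
    exact key
  conv_lhs => rw [← hrec2 μ₁ hae₁]
  conv_rhs => rw [← hrec2 μ₂ hae₂]
  rw [hνeq]


end Stmt7

open MeasureTheory Set

theorem stmt_7 (μ₁ μ₂ : Measure ℝ) (h₁ : μ₁ (Iio 0) = 0) (h₂ : μ₂ (Iio 0) = 0)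
    (hint₁ : ∫⁻ x, ENNReal.ofReal (1 / (1 + x)) ∂μ₁ ≠ ⊤)
    (hint₂ : ∫⁻ x, ENNReal.ofReal (1 / (1 + x)) ∂μ₂ ≠ ⊤)
    (a₁ a₂ : ℝ) (ha₁ : 0 ≤ a₁) (ha₂ : 0 ≤ a₂)
    (heq : ∀ θ : ℝ, 0 < θ →
      a₁ + ∫ x, 1 / (θ + x) ∂μ₁ = a₂ + ∫ x, 1 / (θ + x) ∂μ₂) :
    a₁ = a₂ ∧ μ₁ = μ₂ := by
  have hae₁ := Stmt7.ae_nonneg h₁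
  have hae₂ := Stmt7.ae_nonneg h₂
  have hI₁ := Stmt7.integrable_base hae₁ hint₁
  have hI₂ := Stmt7.integrable_base hae₂ hint₂
  have hT₁ := Stmt7.tendsto_zero hae₁ hI₁
  have hT₂ := Stmt7.tendsto_zero hae₂ hI₂
  have h1 : Filter.Tendsto (fun θ : ℝ => a₁ + ∫ x, (θ + x)⁻¹ ∂μ₁)
      Filter.atTop (nhds (a₁ + 0)) := tendsto_const_nhds.add hT₁
  have h2 : Filter.Tendsto (fun θ : ℝ => a₂ + ∫ x, (θ + x)⁻¹ ∂μ₂)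
      Filter.atTop (nhds (a₂ + 0)) := tendsto_const_nhds.add hT₂
  have hev : (fun θ : ℝ => a₁ + ∫ x, (θ + x)⁻¹ ∂μ₁)
      =ᶠ[Filter.atTop] (fun θ : ℝ => a₂ + ∫ x, (θ + x)⁻¹ ∂μ₂) := by
    filter_upwards [Filter.eventually_gt_atTop (0:ℝ)] with θ hθ
    have := heq θ hθ
    simpa [one_div] using this
  have haa : a₁ = a₂ := by
    have := tendsto_nhds_unique (h1.congr' hev) h2
    simpa using this
  refine ⟨haa, ?_⟩
  have heq' : ∀ θ : ℝ, 0 < θ → ∫ x, (θ + x)⁻¹ ∂μ₁ = ∫ x, (θ + x)⁻¹ ∂μ₂ := by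
    intro θ hθ
    have := heq θ hθ
    simp only [one_div] at this
    linarith [this]
  have hmoments := Stmt7.moment_eq hae₁ hae₂ hI₁ hI₂ heq'
  exact Stmt7.measure_eq hae₁ hae₂ (by simpa [one_div] using hint₁)
    (by simpa [one_div] using hint₂) (fun n => hmoments n 1 one_pos)
end

section
/- Uniqueness of the Lévy–Khintchine representation of a Bernstein function vanishing at 0: if b₁λ + ∫(1-e^{-λx})dν₁(x) = b₂λ + ∫(1-e^{-λx})dν₂(x) for all λ ≥ 0, where bᵢ ≥ 0 and νᵢ are positive measures on (0,∞) with ∫ min(x,1)dνᵢ(x) < ∞, then b₁ = b₂ and ν₁ = ν₂. -/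
open MeasureTheory Real Set Filter
open scoped ENNReal NNReal Topology


lemma ae_pos_of_Iic_zero' (μ : Measure ℝ) (hμ : μ (Iic 0) = 0) : ∀ᵐ x ∂μ, 0 < x := by
  rw [ae_iff]
  convert hμ using 2
  ext x
  simp [not_lt]

lemma one_sub_exp_neg_le (t : ℝ) : 1 - exp (-t) ≤ t := by
  have := Real.add_one_le_exp (-t)
  linarith

lemma integrable_min (ν : Measure ℝ) (h₁ : ν (Iic 0) = 0)
    (hint : ∫⁻ x, ENNReal.ofReal (min x 1) ∂ν ≠ ⊤) :
    Integrable (fun x => min x 1) ν := by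
  refine ⟨(continuous_id.min continuous_const).aestronglyMeasurable, ?_⟩
  rw [hasFiniteIntegral_def]
  have : ∫⁻ x, ‖min x 1‖ₑ ∂ν = ∫⁻ x, ENNReal.ofReal (min x 1) ∂ν := by
    refine lintegral_congr_ae ((ae_pos_of_Iic_zero' ν h₁).mono fun x hx => ?_)
    exact Real.enorm_eq_ofReal (le_min hx.le one_pos.le)
  rw [this]
  exact hint.lt_top

lemma integrable_one_sub_exp (ν : Measure ℝ) (h₁ : ν (Iic 0) = 0)
    (hint : ∫⁻ x, ENNReal.ofReal (min x 1) ∂ν ≠ ⊤) (l : ℝ) (hl : 0 ≤ l) :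
    Integrable (fun x => 1 - exp (-(l * x))) ν := by
  refine Integrable.mono' ((integrable_min ν h₁ hint).const_mul (l + 1))
    ((continuous_const.sub (continuous_exp.comp (continuous_const.mul continuous_id).neg)).aestronglyMeasurable)
    (((ae_pos_of_Iic_zero' ν h₁).mono fun x hx => ?_))
  have hlx : 0 ≤ l * x := mul_nonneg hl hx.le
  have h1 : 0 ≤ 1 - exp (-(l * x)) := by
    have : exp (-(l * x)) ≤ 1 := exp_le_one_iff.mpr (by linarith)
    linarith
  rw [Real.norm_eq_abs, abs_of_nonneg h1]
  rcases le_total x 1 with hx1 | hx1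
  · rw [min_eq_left hx1]
    have := one_sub_exp_neg_le (l * x)
    nlinarith
  · rw [min_eq_right hx1]
    have : exp (-(l * x)) ≥ 0 := (exp_pos _).le
    nlinarith


lemma momentExt (μ ν : Measure (Set.Icc (0:ℝ) 1)) [IsFiniteMeasure μ] [IsFiniteMeasure ν]
    (h : ∀ n : ℕ, ∫ y, (y : ℝ) ^ n ∂μ = ∫ y, (y : ℝ) ^ n ∂ν) : μ = ν := by
  have contInt : ∀ (ρ : Measure (Set.Icc (0:ℝ) 1)) (f : C(Set.Icc (0:ℝ) 1, ℝ)),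
      IsFiniteMeasure ρ → Integrable f ρ := fun ρ f _ =>
    (BoundedContinuousFunction.mkOfCompact f).integrable ρ
  -- continuity of the integral functional
  have contμ : ∀ (ρ : Measure (Set.Icc (0:ℝ) 1)), IsFiniteMeasure ρ →
      Continuous (fun f : C(Set.Icc (0:ℝ) 1, ℝ) => ∫ y, f y ∂ρ) := by
    intro ρ hρ
    apply (LipschitzWith.continuous (K := (ρ Set.univ).toNNReal))
    rw [lipschitzWith_iff_dist_le_mul]
    intro f g
    rw [dist_eq_norm, dist_eq_norm, ← integral_sub (contInt ρ f hρ) (contInt ρ g hρ)]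
    calc ‖∫ y, (f y - g y) ∂ρ‖
        = ‖∫ y, (BoundedContinuousFunction.mkOfCompact (f - g)) y ∂ρ‖ := by
          rfl
      _ ≤ (ρ Set.univ).toReal * ‖BoundedContinuousFunction.mkOfCompact (f - g)‖ :=
          BoundedContinuousFunction.norm_integral_le_mul_norm ρ _
      _ = ((ρ Set.univ).toNNReal : ℝ) * ‖f - g‖ := by
          rw [BoundedContinuousFunction.norm_mkOfCompact]; rfl
  -- all continuous functions
  have key : ∀ f : C(Set.Icc (0:ℝ) 1, ℝ), ∫ y, f y ∂μ = ∫ y, f y ∂ν := by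
    have hclosed : IsClosed {f : C(Set.Icc (0:ℝ) 1, ℝ) | ∫ y, f y ∂μ = ∫ y, f y ∂ν} :=
      isClosed_eq (contμ μ inferInstance) (contμ ν inferInstance)
    intro f
    have hdense := polynomialFunctions.topologicalClosure (Set.Icc (0:ℝ) 1)
    have hf : f ∈ (polynomialFunctions (Set.Icc (0:ℝ) 1)).topologicalClosure := by
      rw [hdense]; trivial
    refine closure_minimal ?_ hclosed hf
    rintro f ⟨p, -, rfl⟩
    simp only [Set.mem_setOf_eq]
    induction p using Polynomial.induction_on' with
    | add p q hp hq =>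
        simp only [map_add, Polynomial.toContinuousMapOn_apply, ContinuousMap.add_apply] at *
        rw [integral_add, integral_add]
        · rw [hp, hq]
        all_goals
          first
          | exact contInt _ _ inferInstance
          | exact contInt _ _ inferInstance
    | monomial n a =>
        have e : ∀ ρ : Measure (Set.Icc (0:ℝ) 1),
            ∫ y, ((Polynomial.monomial n a).toContinuousMapOn (Set.Icc (0:ℝ) 1)) y ∂ρ
              = a * ∫ y, (y:ℝ) ^ n ∂ρ := by
          intro ρ
          rw [← integral_const_mul]
          congr 1
          ext y
          simp [Polynomial.toContinuousMapOn_apply, Polynomial.toContinuousMap_apply,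
            Polynomial.eval_monomial]
        show (∫ y, ((Polynomial.monomial n a).toContinuousMapOn (Set.Icc (0:ℝ) 1)) y ∂μ)
          = ∫ y, ((Polynomial.monomial n a).toContinuousMapOn (Set.Icc (0:ℝ) 1)) y ∂ν
        rw [e, e, h n]
  apply ext_of_forall_lintegral_eq_of_IsFiniteMeasure
  intro f
  have h1 := key (ContinuousMap.mk (fun y => (f y : ℝ)) (NNReal.continuous_coe.comp f.continuous))
  have l1 : ∫⁻ y, (f y : ℝ≥0∞) ∂μ = ∫⁻ y, (f y : ℝ≥0∞) ∂ν := by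
    have e1 := BoundedContinuousFunction.toReal_lintegral_coe_eq_integral f μ
    have e2 := BoundedContinuousFunction.toReal_lintegral_coe_eq_integral f ν
    have fin1 := BoundedContinuousFunction.lintegral_lt_top_of_nnreal μ f
    have fin2 := BoundedContinuousFunction.lintegral_lt_top_of_nnreal ν f
    rw [← ENNReal.toReal_eq_toReal_iff' fin1.ne fin2.ne]
    rw [e1, e2]
    simpa using h1
  exact l1




lemma laplaceExt (μ ν : Measure ℝ) [IsFiniteMeasure μ] [IsFiniteMeasure ν]
    (hμ : μ (Iic 0) = 0) (hν : ν (Iic 0) = 0)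
    (h : ∀ n : ℕ, ∫ x, exp (-x) ^ n ∂μ = ∫ x, exp (-x) ^ n ∂ν) : μ = ν := by
  set g : ℝ → Set.Icc (0:ℝ) 1 := fun x => Set.projIcc 0 1 zero_le_one (exp (-x)) with hg
  have hgcont : Continuous g := continuous_projIcc.comp (continuous_exp.comp continuous_neg)
  have hgval : ∀ x : ℝ, 0 < x → ((g x : ℝ)) = exp (-x) := by
    intro x hx
    rw [hg]
    simp only
    rw [Set.projIcc_of_mem]
    constructor
    · exact (exp_pos _).le
    · exact exp_le_one_iff.mpr (by linarith)
  have hmom : ∀ (ρ : Measure ℝ), IsFiniteMeasure ρ → ρ (Iic 0) = 0 → ∀ n : ℕ,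
      ∫ y, (y : ℝ) ^ n ∂(ρ.map g) = ∫ x, exp (-x) ^ n ∂ρ := by
    intro ρ hρ hρ0 n
    rw [integral_map hgcont.measurable.aemeasurable
      ((show Continuous fun y : Set.Icc (0:ℝ) 1 => (y:ℝ) ^ n from continuous_subtype_val.pow n).aestronglyMeasurable)]
    exact integral_congr_ae ((ae_pos_of_Iic_zero' ρ hρ0).mono fun x hx => by show ((g x : ℝ))^n = exp (-x)^n; rw [hgval x hx])
  have hmap : μ.map g = ν.map g := by
    have h1 : IsFiniteMeasure (μ.map g) := Measure.isFiniteMeasure_map μ g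
    have h2 : IsFiniteMeasure (ν.map g) := Measure.isFiniteMeasure_map ν g
    refine momentExt _ _ fun n => ?_
    rw [hmom μ inferInstance hμ n, hmom ν inferInstance hν n, h n]
  set h' : Set.Icc (0:ℝ) 1 → ℝ := fun y => -Real.log (y : ℝ) with hh'
  have hh'meas : Measurable h' := (Real.measurable_log.comp measurable_subtype_coe).neg
  have hinv : ∀ (ρ : Measure ℝ), ρ (Iic 0) = 0 → (ρ.map g).map h' = ρ := by
    intro ρ hρ0
    rw [Measure.map_map hh'meas hgcont.measurable]
    have : (h' ∘ g) =ᵐ[ρ] id := by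
      refine (ae_pos_of_Iic_zero' ρ hρ0).mono fun x hx => ?_
      simp only [Function.comp_apply, hh', hgval x hx, Real.log_exp, id_eq, neg_neg]
    rw [Measure.map_congr this, Measure.map_id]
  rw [← hinv μ hμ, ← hinv ν hν, hmap]



lemma drift_limit (ν : Measure ℝ) (h₁ : ν (Iic 0) = 0)
    (hint : ∫⁻ x, ENNReal.ofReal (min x 1) ∂ν ≠ ⊤) :
    Tendsto (fun n : ℕ => (∫ x, (1 - exp (-(((n : ℝ) + 1) * x))) ∂ν) / ((n : ℝ) + 1))
      atTop (𝓝 0) := by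
  have key : Tendsto (fun n : ℕ => ∫ x, (1 - exp (-(((n : ℝ) + 1) * x))) / ((n : ℝ) + 1) ∂ν)
      atTop (𝓝 0) := by
    have h0 : (0 : ℝ) = ∫ x, (0 : ℝ) ∂ν := by simp
    rw [h0]
    apply tendsto_integral_of_dominated_convergence (fun x => min x 1)
    · intro n
      exact ((integrable_one_sub_exp ν h₁ hint _ (by positivity)).div_const _).aestronglyMeasurable
    · exact integrable_min ν h₁ hint
    · intro n
      refine (ae_pos_of_Iic_zero' ν h₁).mono fun x hx => ?_
      have hn : (0 : ℝ) < (n : ℝ) + 1 := by positivity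
      have hlx : 0 ≤ ((n : ℝ) + 1) * x := by positivity
      have hle : exp (-(((n : ℝ) + 1) * x)) ≤ 1 := exp_le_one_iff.mpr (by linarith)
      have hpos := (exp_pos (-(((n : ℝ) + 1) * x))).le
      have h1 : 0 ≤ 1 - exp (-(((n : ℝ) + 1) * x)) := by linarith
      have ht := one_sub_exp_neg_le (((n : ℝ) + 1) * x)
      rw [Real.norm_eq_abs, abs_div, abs_of_nonneg h1, abs_of_nonneg hn.le]
      refine le_min ?_ ?_
      · rw [div_le_iff₀ hn]; nlinarith
      · rw [div_le_one hn]; linarith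
    · refine (ae_pos_of_Iic_zero' ν h₁).mono fun x hx => ?_
      apply squeeze_zero (fun n => ?_) (fun n => ?_) tendsto_one_div_add_atTop_nhds_zero_nat
      · have hn : (0 : ℝ) < (n : ℝ) + 1 := by positivity
        have hlx : 0 ≤ ((n : ℝ) + 1) * x := by positivity
        have hle : exp (-(((n : ℝ) + 1) * x)) ≤ 1 := exp_le_one_iff.mpr (by linarith)
        exact div_nonneg (by linarith) hn.le
      · have hn : (0 : ℝ) < (n : ℝ) + 1 := by positivity
        have hge : (0:ℝ) < exp (-(((n : ℝ) + 1) * x)) := exp_pos _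
        rw [div_le_div_iff₀ hn hn]
        nlinarith [hge]
  simpa only [integral_div] using key



theorem stmt_17 (ν₁ ν₂ : Measure ℝ) (h₁ : ν₁ (Iic 0) = 0) (h₂ : ν₂ (Iic 0) = 0)
    (hint₁ : ∫⁻ x, ENNReal.ofReal (min x 1) ∂ν₁ ≠ ⊤)
    (hint₂ : ∫⁻ x, ENNReal.ofReal (min x 1) ∂ν₂ ≠ ⊤)
    (b₁ b₂ : ℝ) (hb₁ : 0 ≤ b₁) (hb₂ : 0 ≤ b₂)
    (heq : ∀ l : ℝ, 0 ≤ l →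
      b₁ * l + ∫ x, (1 - exp (-(l * x))) ∂ν₁
        = b₂ * l + ∫ x, (1 - exp (-(l * x))) ∂ν₂) :
    b₁ = b₂ ∧ ν₁ = ν₂ := by
  -- Step 1: b₁ = b₂
  have hbdiff : ∀ n : ℕ, b₁ - b₂ = (∫ x, (1 - exp (-(((n:ℝ)+1) * x))) ∂ν₂)/((n:ℝ)+1)
      - (∫ x, (1 - exp (-(((n:ℝ)+1) * x))) ∂ν₁)/((n:ℝ)+1) := by
    intro n
    have h := heq ((n:ℝ)+1) (by positivity)
    have hn : ((n:ℝ)+1) ≠ 0 := by positivity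
    field_simp
    linarith [h]
  have hb : b₁ = b₂ := by
    have ht : Tendsto (fun _ : ℕ => b₁ - b₂) atTop (𝓝 (0 - 0)) := by
      exact Tendsto.congr (fun n => (hbdiff n).symm)
        ((drift_limit ν₂ h₂ hint₂).sub (drift_limit ν₁ h₁ hint₁))
    rw [sub_zero] at ht
    have := tendsto_nhds_unique ht tendsto_const_nhds
    linarith
  refine ⟨hb, ?_⟩
  -- Step 2: equality of the integral parts
  have hF : ∀ l : ℝ, 0 ≤ l →
      ∫ x, (1 - exp (-(l * x))) ∂ν₁ = ∫ x, (1 - exp (-(l * x))) ∂ν₂ := by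
    intro l hl
    have := heq l hl
    rw [hb] at this
    linarith
  -- density
  set nn : ℝ → ℝ≥0 := fun x => Real.toNNReal (1 - exp (-x)) with hnn
  have hnnmeas : Measurable nn :=
    (continuous_real_toNNReal.comp (by continuity)).measurable
  set f : ℝ → ℝ≥0∞ := fun x => (nn x : ℝ≥0∞) with hf
  have hfmeas : Measurable f := hnnmeas.coe_nnreal_ennreal
  have hfofReal : ∀ x, f x = ENNReal.ofReal (1 - exp (-x)) := fun x => rfl
  have hexp_le : ∀ x : ℝ, 1 - exp (-x) ≤ min x 1 := fun x =>
    le_min (one_sub_exp_neg_le x) (by linarith [exp_pos (-x)])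
  have hfin : ∀ ν : Measure ℝ, (∫⁻ x, ENNReal.ofReal (min x 1) ∂ν ≠ ⊤) →
      IsFiniteMeasure (ν.withDensity f) := by
    intro ν hint
    constructor
    rw [withDensity_apply _ MeasurableSet.univ, Measure.restrict_univ]
    calc ∫⁻ x, f x ∂ν ≤ ∫⁻ x, ENNReal.ofReal (min x 1) ∂ν := by
          refine lintegral_mono fun x => ?_
          rw [hfofReal]
          exact ENNReal.ofReal_le_ofReal (hexp_le x)
      _ < ⊤ := hint.lt_top
  have hIic : ∀ ν : Measure ℝ, ν (Iic 0) = 0 → (ν.withDensity f) (Iic 0) = 0 := by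
    intro ν hν
    rw [withDensity_apply _ measurableSet_Iic, Measure.restrict_eq_zero.mpr hν,
      lintegral_zero_measure]
  -- Laplace transforms of the two finite measures agree
  have hkey : ∀ (ν : Measure ℝ), ν (Iic 0) = 0 →
      (∫⁻ x, ENNReal.ofReal (min x 1) ∂ν ≠ ⊤) → ∀ n : ℕ,
      ∫ x, exp (-x) ^ n ∂(ν.withDensity f)
        = (∫ x, (1 - exp (-(((n:ℝ)+1) * x))) ∂ν) - ∫ x, (1 - exp (-((n:ℝ) * x))) ∂ν := by
    intro ν hν hint n
    rw [show ν.withDensity f = ν.withDensity (fun x => ((nn x : ℝ≥0) : ℝ≥0∞)) from rfl,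
      integral_withDensity_eq_integral_smul hnnmeas,
      ← integral_sub (integrable_one_sub_exp ν hν hint _ (by positivity))
        (integrable_one_sub_exp ν hν hint _ (by positivity))]
    refine integral_congr_ae ((ae_pos_of_Iic_zero' ν hν).mono fun x hx => ?_)
    show nn x • exp (-x) ^ n
      = (1 - exp (-(((n:ℝ)+1) * x))) - (1 - exp (-((n:ℝ) * x)))
    have h1 : exp (-x) ≤ 1 := exp_le_one_iff.mpr (by linarith)
    have hcoe : ((nn x : ℝ≥0) : ℝ) = 1 - exp (-x) := by
      rw [hnn]
      exact Real.coe_toNNReal _ (by linarith)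
    rw [NNReal.smul_def, smul_eq_mul, hcoe]
    have hpow : exp (-x) ^ n = exp (-((n:ℝ) * x)) := by
      rw [← Real.exp_nat_mul]
      ring_nf
    have hmul : exp (-x) * exp (-((n:ℝ) * x)) = exp (-(((n:ℝ)+1) * x)) := by
      rw [← Real.exp_add]
      ring_nf
    rw [hpow]
    nlinarith [hmul]
  have hmain : ν₁.withDensity f = ν₂.withDensity f := by
    haveI := hfin ν₁ hint₁
    haveI := hfin ν₂ hint₂
    refine laplaceExt _ _ (hIic ν₁ h₁) (hIic ν₂ h₂) fun n => ?_
    rw [hkey ν₁ h₁ hint₁ n, hkey ν₂ h₂ hint₂ n,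
      hF ((n:ℝ)+1) (by positivity), hF (n:ℝ) (by positivity)]
  -- invert the density
  have hinv : ∀ ν : Measure ℝ, ν (Iic 0) = 0 →
      (ν.withDensity f).withDensity f⁻¹ = ν := by
    intro ν hν
    refine withDensity_inv_same hfmeas ?_ ?_
    · refine (ae_pos_of_Iic_zero' ν hν).mono fun x hx => ?_
      rw [hfofReal]
      simp only [ne_eq, ENNReal.ofReal_eq_zero, not_le]
      have : exp (-x) < 1 := exp_lt_one_iff.mpr (by linarith)
      linarith
    · exact Eventually.of_forall fun x => ENNReal.coe_ne_top
  rw [← hinv ν₁ h₁, ← hinv ν₂ h₂, hmain]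
end
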